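/- (Jacobian of the cone parametrization.) Fix t > 0 and r ≥ 0. Define the map Φ : {(R,η₂,η₃) ∈ ℝ³ : η₂² + η₃² < 1, 0 < R < t} → ℝ³ by Φ(R,η₂,η₃) = ( (r − R·√(1−η₂²−η₃²))/(t − R), −R·η₂/(t − R), −R·η₃/(t − R) ). Then Φ is differentiable and its Jacobian determinant equals det DΦ(R,η₂,η₃) = R²·( r·√(1−η₂²−η₃²) − t )/( (R − t)⁴·√(1−η₂²−η₃²) ). -/

import Mathlib

noncomputable section

/-- The cone parametrization `Φ(R,η₂,η₃) = (x − Rη)/(t − R)` with `x = (r,0,0)` and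
`η = (√(1−η₂²−η₃²), η₂, η₃)`. -/
def Phi (t r : ℝ) (p : Fin 3 → ℝ) : Fin 3 → ℝ :=
  ![(r - p 0 * Real.sqrt (1 - (p 1) ^ 2 - (p 2) ^ 2)) / (t - p 0),
    -(p 0 * p 1) / (t - p 0),
    -(p 0 * p 2) / (t - p 0)]

private def pr (i : Fin 3) : (Fin 3 → ℝ) →L[ℝ] ℝ := ContinuousLinearMap.proj i

@[simp] private lemma pr_apply (i : Fin 3) (q : Fin 3 → ℝ) : pr i q = q i := rfl

set_option maxHeartbeats 1000000 in
/-- Jacobian of the cone parametrization: on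
`{(R,η₂,η₃) : η₂²+η₃² < 1, 0 < R < t}`, `Φ` is differentiable with Jacobian determinant
`R²(r√(1−η₂²−η₃²) − t)/((R−t)⁴√(1−η₂²−η₃²))`. -/
theorem cone_jacobian (t r : ℝ) (ht : 0 < t) (hr : 0 ≤ r)
    (p : Fin 3 → ℝ) (hη : (p 1) ^ 2 + (p 2) ^ 2 < 1) (hR0 : 0 < p 0) (hRt : p 0 < t) :
    DifferentiableAt ℝ (Phi t r) p ∧
      LinearMap.det ((fderiv ℝ (Phi t r) p : (Fin 3 → ℝ) →L[ℝ] (Fin 3 → ℝ)) :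
          (Fin 3 → ℝ) →ₗ[ℝ] (Fin 3 → ℝ)) =
        (p 0) ^ 2 * (r * Real.sqrt (1 - (p 1) ^ 2 - (p 2) ^ 2) - t) /
          ((p 0 - t) ^ 4 * Real.sqrt (1 - (p 1) ^ 2 - (p 2) ^ 2)) := by
  have hq : (0:ℝ) < 1 - p 1 ^ 2 - p 2 ^ 2 := by nlinarith
  have hs0 : 0 < Real.sqrt (1 - p 1 ^ 2 - p 2 ^ 2) := Real.sqrt_pos.2 hq
  have hs2 : Real.sqrt (1 - p 1 ^ 2 - p 2 ^ 2) ^ 2 = 1 - p 1 ^ 2 - p 2 ^ 2 :=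
    Real.sq_sqrt hq.le
  set s := Real.sqrt (1 - p 1 ^ 2 - p 2 ^ 2) with hsdef
  have hd0 : t - p 0 ≠ 0 := sub_ne_zero.2 hRt.ne'
  -- coordinate derivatives
  have hc : ∀ i : Fin 3, HasFDerivAt (fun q : Fin 3 → ℝ => q i) (pr i) p :=
    fun i => hasFDerivAt_apply i p
  -- denominator and its inverse
  have hden : HasFDerivAt (fun q : Fin 3 → ℝ => t - q 0) ((0 : (Fin 3 → ℝ) →L[ℝ] ℝ) - pr 0) p :=
    (hasFDerivAt_const t p).sub (hc 0)
  have hinv : HasFDerivAt (fun q : Fin 3 → ℝ => (t - q 0)⁻¹)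
      ((-((t - p 0) ^ 2)⁻¹) • ((0 : (Fin 3 → ℝ) →L[ℝ] ℝ) - pr 0)) p :=
    (hasDerivAt_inv hd0).comp_hasFDerivAt p hden
  -- the sqrt part
  have hpow1 : HasFDerivAt (fun q : Fin 3 → ℝ => q 1 ^ 2) ((2 * p 1) • pr 1) p := by
    have := (hasDerivAt_pow 2 (p 1)).comp_hasFDerivAt p (hc 1)
    simpa [Function.comp_def] using this
  have hpow2 : HasFDerivAt (fun q : Fin 3 → ℝ => q 2 ^ 2) ((2 * p 2) • pr 2) p := by
    have := (hasDerivAt_pow 2 (p 2)).comp_hasFDerivAt p (hc 2)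
    simpa [Function.comp_def] using this
  have hin : HasFDerivAt (fun q : Fin 3 → ℝ => 1 - q 1 ^ 2 - q 2 ^ 2)
      ((0 : (Fin 3 → ℝ) →L[ℝ] ℝ) - (2 * p 1) • pr 1 - (2 * p 2) • pr 2) p :=
    ((hasFDerivAt_const 1 p).sub hpow1).sub hpow2
  have hsqrt : HasFDerivAt (fun q : Fin 3 → ℝ => Real.sqrt (1 - q 1 ^ 2 - q 2 ^ 2))
      ((1 / (2 * s)) • ((0 : (Fin 3 → ℝ) →L[ℝ] ℝ) - (2 * p 1) • pr 1 - (2 * p 2) • pr 2)) p :=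
    hin.sqrt hq.ne'
  -- numerators
  have hnum0 : HasFDerivAt (fun q : Fin 3 → ℝ => r - q 0 * Real.sqrt (1 - q 1 ^ 2 - q 2 ^ 2))
      ((0 : (Fin 3 → ℝ) →L[ℝ] ℝ) -
        (p 0 • ((1 / (2 * s)) • ((0 : (Fin 3 → ℝ) →L[ℝ] ℝ) - (2 * p 1) • pr 1 - (2 * p 2) • pr 2))
          + s • pr 0)) p :=
    (hasFDerivAt_const r p).sub ((hc 0).mul hsqrt)
  have hnum1 : HasFDerivAt (fun q : Fin 3 → ℝ => -(q 0 * q 1))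
      (-(p 0 • pr 1 + p 1 • pr 0)) p := ((hc 0).mul (hc 1)).neg
  have hnum2 : HasFDerivAt (fun q : Fin 3 → ℝ => -(q 0 * q 2))
      (-(p 0 • pr 2 + p 2 • pr 0)) p := ((hc 0).mul (hc 2)).neg
  -- the three components
  set D : Fin 3 → ((Fin 3 → ℝ) →L[ℝ] ℝ) :=
    ![((r - p 0 * s) • ((-((t - p 0) ^ 2)⁻¹) • ((0 : (Fin 3 → ℝ) →L[ℝ] ℝ) - pr 0))
        + (t - p 0)⁻¹ • ((0 : (Fin 3 → ℝ) →L[ℝ] ℝ) -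
          (p 0 • ((1 / (2 * s)) • ((0 : (Fin 3 → ℝ) →L[ℝ] ℝ) - (2 * p 1) • pr 1 - (2 * p 2) • pr 2))
            + s • pr 0))),
     ((-(p 0 * p 1)) • ((-((t - p 0) ^ 2)⁻¹) • ((0 : (Fin 3 → ℝ) →L[ℝ] ℝ) - pr 0))
        + (t - p 0)⁻¹ • (-(p 0 • pr 1 + p 1 • pr 0))),
     ((-(p 0 * p 2)) • ((-((t - p 0) ^ 2)⁻¹) • ((0 : (Fin 3 → ℝ) →L[ℝ] ℝ) - pr 0))
        + (t - p 0)⁻¹ • (-(p 0 • pr 2 + p 2 • pr 0)))] with hD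
  have hPhi : HasFDerivAt (Phi t r) (ContinuousLinearMap.pi D) p := by
    apply hasFDerivAt_pi''
    intro i
    fin_cases i <;>
      simp only [hD, Phi, ContinuousLinearMap.proj_pi, Matrix.cons_val_zero, Matrix.cons_val_one, Matrix.head_cons,
        Matrix.cons_val_two, Matrix.tail_cons, Fin.isValue, div_eq_mul_inv]
    · exact hnum0.mul hinv
    · exact hnum1.mul hinv
    · exact hnum2.mul hinv
  refine ⟨hPhi.differentiableAt, ?_⟩
  rw [hPhi.fderiv]
  rw [← LinearMap.det_toMatrix' , Matrix.det_fin_three]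
  simp only [LinearMap.toMatrix'_apply, ContinuousLinearMap.coe_pi, LinearMap.pi_apply,
    ContinuousLinearMap.coe_coe, hD]
  simp only [Matrix.cons_val_zero, Matrix.cons_val_one, Matrix.head_cons, Matrix.cons_val_two,
    Matrix.tail_cons, ContinuousLinearMap.add_apply, ContinuousLinearMap.smul_apply,
    ContinuousLinearMap.sub_apply, ContinuousLinearMap.zero_apply, ContinuousLinearMap.neg_apply,
    pr_apply, smul_eq_mul]
  have hs' : s ≠ 0 := hs0.ne'
  norm_num [Fin.ext_iff]
  have hpt : p 0 - t = -(t - p 0) := by ring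
  rw [hpt]
  obtain ⟨A, hA⟩ : ∃ A : ℝ, A = t - p 0 := ⟨_, rfl⟩
  have hA0 : A ≠ 0 := hA ▸ hd0
  rw [← hA]
  rw [eq_div_iff (mul_ne_zero (pow_ne_zero _ (neg_ne_zero.2 hA0)) hs')]
  field_simp
  ring_nf
  linear_combination (-(p 0 + A)) * hs2 - hA
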